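/- If X is a random variable stochastically dominated by Y in the usual stochastic order on some probability space, and Q ≥_st U where U is uniform on [0,1], then P = E(Q | D) satisfies P ≤_dcx U: for every decreasing convex function h, E[h(P)] ≤ E[h(U)]. -/

import Mathlib

open MeasureTheory Set
open scoped ENNReal

namespace DcxAux

variable {h : ℝ → ℝ}

noncomputable def rSlope (h : ℝ → ℝ) (r : ℝ) : ℝ :=
  sInf ((fun y => (h y - h r) / (y - r)) '' Ioi r)

lemma slope_comm (f : ℝ → ℝ) (a b : ℝ) :
    (f a - f b) / (a - b) = (f b - f a) / (b - a) := by
  rw [show f b - f a = -(f a - f b) by ring, show b - a = -(a - b) by ring, neg_div_neg_eq]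

lemma slope_mono (hconv : ConvexOn ℝ univ h) {a x y : ℝ} (hxa : x ≠ a) (hya : y ≠ a)
    (hxy : x ≤ y) : (h x - h a) / (x - a) ≤ (h y - h a) / (y - a) :=
  hconv.secant_mono (mem_univ a) (mem_univ x) (mem_univ y) hxa hya hxy

lemma rSlope_lb (hconv : ConvexOn ℝ univ h) {r c : ℝ}
    (hc : ∀ y, r < y → c ≤ (h y - h r) / (y - r)) : c ≤ rSlope h r := by
  refine le_csInf ⟨_, ⟨r+1, mem_Ioi.2 (by linarith), rfl⟩⟩ ?_
  rintro b ⟨y, hy, rfl⟩; exact hc y hy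

lemma rSlope_le (hconv : ConvexOn ℝ univ h) {r y : ℝ} (hy : r < y) :
    rSlope h r ≤ (h y - h r) / (y - r) := by
  refine csInf_le ⟨(h (r-1) - h r)/((r-1) - r), ?_⟩ ⟨y, hy, rfl⟩
  rintro b ⟨z, hz, rfl⟩
  exact slope_mono hconv (by norm_num) (ne_of_gt hz) (by exact le_of_lt (by linarith [mem_Ioi.1 hz]))

lemma slope_le_rSlope (hconv : ConvexOn ℝ univ h) {r x : ℝ} (hx : x < r) :
    (h x - h r) / (x - r) ≤ rSlope h r := by
  refine rSlope_lb hconv fun y hy => slope_mono hconv (ne_of_lt hx) (ne_of_gt hy) (by linarith)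

lemma rSlope_support (hconv : ConvexOn ℝ univ h) (r x : ℝ) :
    h r + rSlope h r * (x - r) ≤ h x := by
  rcases lt_trichotomy x r with hx | rfl | hx
  · have h1 := slope_le_rSlope hconv hx
    have h2 : x - r < 0 := by linarith
    have := mul_le_mul_of_nonpos_right h1 h2.le
    rw [div_mul_cancel₀ _ (by linarith : x - r ≠ 0)] at this
    linarith
  · simp
  · have h1 := rSlope_le hconv hx
    have h2 : (0:ℝ) < x - r := by linarith
    have := mul_le_mul_of_nonneg_right h1 h2.le
    rw [div_mul_cancel₀ _ (by linarith : x - r ≠ 0)] at this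
    linarith

lemma rSlope_approx (hconv : ConvexOn ℝ univ h) (x : ℝ) {ε : ℝ} (hε : 0 < ε) :
    ∃ r : ℚ, h x - ε ≤ h r + rSlope h r * (x - (r:ℝ)) := by
  set C : ℝ := (h (x-1) - h (x-2)) / ((x-1) - (x-2)) with hC
  set C' : ℝ := (h (x+1) - h x) / ((x+1) - x) with hC'
  have hCC' : C ≤ C' := by
    have h1 : (h (x-2) - h (x-1)) / ((x-2) - (x-1)) ≤ (h (x+1) - h (x-1)) / ((x+1) - (x-1)) :=
      slope_mono hconv (a := x-1) (ne_of_lt (by linarith)) (ne_of_gt (by linarith)) (by linarith)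
    have h2 : (h (x-1) - h x) / ((x-1) - x) ≤ (h (x+1) - h x) / ((x+1) - x) :=
      slope_mono hconv (a := x) (ne_of_lt (by linarith)) (ne_of_gt (by linarith)) (by linarith)
    have h3 : (h (x-1) - h (x+1)) / ((x-1) - (x+1)) ≤ (h x - h (x+1)) / (x - (x+1)) :=
      slope_mono hconv (a := x+1) (ne_of_lt (by linarith)) (ne_of_lt (by linarith)) (by linarith)
    rw [slope_comm h (x-2) (x-1)] at h1
    rw [slope_comm h (x-1) x] at h2
    rw [slope_comm h (x-1) (x+1), slope_comm h x (x+1)] at h3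
    calc C ≤ (h (x+1) - h (x-1)) / ((x+1) - (x-1)) := h1
    _ ≤ C' := h3
  set δ : ℝ := min 1 (ε / (C' - C + 1)) with hδ
  have hδpos : 0 < δ := lt_min one_pos (div_pos hε (by linarith))
  obtain ⟨r, hr1, hr2⟩ := exists_rat_btwn (show x - δ < x by linarith)
  refine ⟨r, ?_⟩
  have hrx : (r:ℝ) < x := hr2
  have hδ1 : δ ≤ 1 := min_le_left _ _
  have hr1' : x - 1 < (r:ℝ) := by linarith
  -- slope(r, x) ≤ C'
  have hsl1 : (h x - h r) / (x - r) ≤ C' := by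
    have := slope_mono hconv (a := (r:ℝ)) (x := x) (y := x + 1)
      (ne_of_gt hrx) (ne_of_gt (by linarith)) (by linarith)
    have h2 : (h (x+1) - h r) / ((x+1) - r) ≤ C' := by
      have := slope_mono hconv (a := x+1) (x := (r:ℝ)) (y := x)
        (ne_of_lt (by linarith)) (ne_of_lt (by linarith)) (by linarith)
      rw [slope_comm h (r:ℝ) (x+1), slope_comm h x (x+1)] at this
      exact this
    exact le_trans this h2
  -- C ≤ rSlope at r
  have hsl2 : C ≤ rSlope h r := by
    refine le_trans ?_ (slope_le_rSlope hconv (show (r:ℝ) - 1 < r by linarith))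
    rw [slope_comm h ((r:ℝ)-1) r]
    have hA : (h (x-2) - h r) / ((x-2) - r) ≤ (h ((r:ℝ)-1) - h r) / (((r:ℝ)-1) - r) :=
      slope_mono hconv (a := (r:ℝ)) (ne_of_lt (by linarith)) (ne_of_lt (by linarith)) (by linarith)
    have hB : (h (x-1) - h (x-2)) / ((x-1) - (x-2)) ≤ (h (r:ℝ) - h (x-2)) / ((r:ℝ) - (x-2)) :=
      slope_mono hconv (a := x-2) (ne_of_gt (by linarith)) (ne_of_gt (by linarith)) (by linarith)
    rw [slope_comm h (x-2) (r:ℝ)] at hA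
    rw [slope_comm h (r:ℝ) (x-2)] at hA
    calc C ≤ (h (r:ℝ) - h (x-2)) / ((r:ℝ) - (x-2)) := hB
    _ = (h (x-2) - h r) / ((x-2) - r) := slope_comm h (r:ℝ) (x-2)
    _ ≤ (h ((r:ℝ)-1) - h r) / (((r:ℝ)-1) - r) := hA
    _ = (h (r:ℝ) - h ((r:ℝ)-1)) / ((r:ℝ) - ((r:ℝ)-1)) := slope_comm h _ _
  -- combine
  have hgap : h x - (h r + rSlope h r * (x - r)) ≤ δ * (C' - C) := by
    have hxr : (0:ℝ) < x - r := by linarith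
    have e : h x - h r = ((h x - h r) / (x - r)) * (x - r) := by
      field_simp
    have b1 : ((h x - h r) / (x - r)) * (x - r) - rSlope h r * (x - r)
        = ((h x - h r) / (x - r) - rSlope h r) * (x - r) := by ring
    have b2 : ((h x - h r) / (x - r) - rSlope h r) * (x - r) ≤ (C' - C) * (x - r) := by
      apply mul_le_mul_of_nonneg_right _ hxr.le
      linarith
    have b3 : (C' - C) * (x - r) ≤ (C' - C) * δ := by
      apply mul_le_mul_of_nonneg_left _ (by linarith)
      linarith
    calc h x - (h r + rSlope h r * (x - r)) = ((h x - h r) / (x - r)) * (x - r) - rSlope h r * (x - r) - 0 := by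
          rw [← e]; ring
    _ ≤ (C' - C) * δ := by rw [b1]; linarith
    _ = δ * (C' - C) := by ring
  have hfin : δ * (C' - C) < ε := by
    have : δ ≤ ε / (C' - C + 1) := min_le_right _ _
    have h0 : 0 ≤ C' - C := by linarith
    calc δ * (C' - C) ≤ (ε / (C' - C + 1)) * (C' - C) := by
          apply mul_le_mul_of_nonneg_right this h0
    _ < ε := by
          rw [div_mul_eq_mul_div, div_lt_iff₀ (by linarith)]
          nlinarith
  linarith

lemma swap_aux {Ω : Type*} [MeasurableSpace Ω] (μ : Measure Ω) [SigmaFinite μ]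
    (ν : Measure ℝ) [SigmaFinite ν] (Q : Ω → ℝ) (hQ : Measurable Q) :
    ∫⁻ ω, ν (Ioc (Q ω) 1) ∂μ = ∫⁻ t, μ {ω | Q ω < t ∧ t ≤ 1} ∂ν := by
  have hS : MeasurableSet {p : Ω × ℝ | Q p.1 < p.2 ∧ p.2 ≤ 1} :=
    (measurableSet_lt (hQ.comp measurable_fst) measurable_snd).inter
      (measurable_snd measurableSet_Iic)
  have h1 : ∀ ω, ν (Ioc (Q ω) 1)
      = ∫⁻ t, {p : Ω × ℝ | Q p.1 < p.2 ∧ p.2 ≤ 1}.indicator (fun _ => (1:ℝ≥0∞)) (ω, t) ∂ν := by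
    intro ω
    have he : (fun t => {p : Ω × ℝ | Q p.1 < p.2 ∧ p.2 ≤ 1}.indicator (fun _ => (1:ℝ≥0∞)) (ω, t))
        = (Ioc (Q ω) 1).indicator (fun _ => (1:ℝ≥0∞)) := by
      funext t
      by_cases ht : t ∈ Ioc (Q ω) 1
      · rw [indicator_of_mem ht, indicator_of_mem]
        exact ⟨ht.1, ht.2⟩
      · rw [indicator_of_notMem ht, indicator_of_notMem]
        intro hc; exact ht ⟨hc.1, hc.2⟩
    rw [he]
    exact (lintegral_indicator_one measurableSet_Ioc).symm
  have h2 : ∀ t, μ {ω | Q ω < t ∧ t ≤ 1}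
      = ∫⁻ ω, {p : Ω × ℝ | Q p.1 < p.2 ∧ p.2 ≤ 1}.indicator (fun _ => (1:ℝ≥0∞)) (ω, t) ∂μ := by
    intro t
    have hm : MeasurableSet {ω | Q ω < t ∧ t ≤ 1} := by
      by_cases ht : t ≤ 1
      · simp only [ht, and_true]
        exact measurableSet_lt hQ measurable_const
      · simp only [ht, and_false]
        exact MeasurableSet.empty
    have he : (fun ω => {p : Ω × ℝ | Q p.1 < p.2 ∧ p.2 ≤ 1}.indicator (fun _ => (1:ℝ≥0∞)) (ω, t))
        = {ω | Q ω < t ∧ t ≤ 1}.indicator (fun _ => (1:ℝ≥0∞)) := by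
      funext ω
      by_cases hω : ω ∈ {ω | Q ω < t ∧ t ≤ 1}
      · rw [indicator_of_mem hω, indicator_of_mem]; exact hω
      · rw [indicator_of_notMem hω, indicator_of_notMem]; exact hω
    rw [he]
    exact (lintegral_indicator_one hm).symm
  simp_rw [h1, h2]
  rw [lintegral_lintegral_swap]
  exact (measurable_one.indicator hS).aemeasurable

lemma stoch_step {Ω : Type*} [MeasurableSpace Ω] (μ : Measure Ω) [IsProbabilityMeasure μ]
    (Q : Ω → ℝ) (hQmeas : Measurable Q) (hQmem : ∀ ω, Q ω ∈ Icc (0 : ℝ) 1)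
    (hQst : ∀ t : ℝ, μ {ω | Q ω ≤ t} ≤ ENNReal.ofReal t)
    (h : ℝ → ℝ) (hcont : Continuous h) (hdecr : Antitone h)
    (hintU : IntegrableOn h (Icc (0 : ℝ) 1) volume) :
    ∫ ω, h (Q ω) ∂μ ≤ ∫ u in Icc (0 : ℝ) 1, h u := by
  classical
  set f : StieltjesFunction ℝ :=
    { toFun := fun x => - h x
      mono' := fun a b hab => neg_le_neg (hdecr hab)
      right_continuous' := fun x => ((hcont.neg).continuousAt).continuousWithinAt } with hf
  set ν : Measure ℝ := f.measure with hν
  have hIoc : ∀ a : ℝ, a ≤ 1 → ν (Ioc a 1) = ENNReal.ofReal (h a - h 1) := by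
    intro a ha
    rw [hν, f.measure_Ioc]
    congr 1
    show -h 1 - (-h a) = h a - h 1
    ring
  set K : ℝ → ℝ≥0∞ := fun t => (Ioc (0:ℝ) 1).indicator (fun t => ENNReal.ofReal t) t with hK
  set I : ℝ≥0∞ := ∫⁻ ω, ENNReal.ofReal (h (Q ω) - h 1) ∂μ with hI
  set J : ℝ≥0∞ := ∫⁻ u in Icc (0:ℝ) 1, ENNReal.ofReal (h u - h 1) ∂volume with hJ
  have hIeq : I = ∫⁻ t, μ {ω | Q ω < t ∧ t ≤ 1} ∂ν := by
    rw [hI, ← swap_aux μ ν Q hQmeas]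
    exact lintegral_congr fun ω => by rw [hIoc (Q ω) (hQmem ω).2]
  have hineq : ∀ t, μ {ω | Q ω < t ∧ t ≤ 1} ≤ K t := by
    intro t
    show _ ≤ (Ioc (0:ℝ) 1).indicator (fun t => ENNReal.ofReal t) t
    by_cases ht : t ∈ Ioc (0:ℝ) 1
    · rw [indicator_of_mem ht]
      calc μ {ω | Q ω < t ∧ t ≤ 1} ≤ μ {ω | Q ω ≤ t} := by
            apply measure_mono; intro ω hω; exact le_of_lt hω.1
      _ ≤ ENNReal.ofReal t := hQst t
    · rw [indicator_of_notMem ht]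
      have hemp : {ω | Q ω < t ∧ t ≤ 1} = (∅ : Set Ω) := by
        ext ω
        simp only [mem_setOf_eq, mem_empty_iff_false, iff_false, not_and]
        intro h1 h2
        have ht' : t ≤ 0 ∨ 1 < t := by
          rcases le_or_gt t 0 with h3 | h3
          · exact Or.inl h3
          · rcases le_or_gt t 1 with h4 | h4
            · exact absurd ⟨h3, h4⟩ ht
            · exact Or.inr h4
        rcases ht' with h3 | h3
        · exact absurd (lt_of_le_of_lt (hQmem ω).1 h1) (by linarith)
        · linarith
      rw [hemp, measure_empty]
  -- J computation: exactly ∫ K dν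
  have hvol : ∀ t : ℝ, (volume.restrict (Icc (0:ℝ) 1)) {u : ℝ | u < t ∧ t ≤ 1} = K t := by
    intro t
    show _ = (Ioc (0:ℝ) 1).indicator (fun t => ENNReal.ofReal t) t
    by_cases ht : t ∈ Ioc (0:ℝ) 1
    · rw [indicator_of_mem ht]
      have he : {u : ℝ | u < t ∧ t ≤ 1} = Iio t := by
        ext u; simp [ht.2]
      rw [he, Measure.restrict_apply measurableSet_Iio]
      have : Iio t ∩ Icc (0:ℝ) 1 = Ico 0 t := by
        ext u
        simp only [mem_inter_iff, mem_Iio, mem_Icc, mem_Ico]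
        constructor
        · rintro ⟨h1, h2, h3⟩; exact ⟨h2, h1⟩
        · rintro ⟨h1, h2⟩; exact ⟨h2, h1, by linarith [ht.2]⟩
      rw [this, Real.volume_Ico, sub_zero]
    · rw [indicator_of_notMem ht]
      have ht' : t ≤ 0 ∨ 1 < t := by
        rcases le_or_gt t 0 with h3 | h3
        · exact Or.inl h3
        · rcases le_or_gt t 1 with h4 | h4
          · exact absurd ⟨h3, h4⟩ ht
          · exact Or.inr h4
      rcases ht' with h3 | h3
      · have he : {u : ℝ | u < t ∧ t ≤ 1} ∩ Icc (0:ℝ) 1 = ∅ := by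
          ext u
          simp only [mem_inter_iff, mem_setOf_eq, mem_Icc, mem_empty_iff_false, iff_false]
          rintro ⟨⟨h1, _⟩, h2, _⟩; linarith
        rw [Measure.restrict_apply' measurableSet_Icc, he, measure_empty]
      · have he : {u : ℝ | u < t ∧ t ≤ 1} = ∅ := by
          ext u; simp only [mem_setOf_eq, mem_empty_iff_false, iff_false]
          rintro ⟨_, h2⟩; linarith
        rw [he]; simp
  have hJeq : J = ∫⁻ t, K t ∂ν := by
    have hJ1 : J = ∫⁻ u in Icc (0:ℝ) 1, ν (Ioc u 1) ∂volume := by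
      refine setLIntegral_congr_fun measurableSet_Icc (fun u hu => ?_)
      rw [hIoc u hu.2]
    have hsw := swap_aux (volume.restrict (Icc (0:ℝ) 1)) ν id measurable_id
    simp only [id_eq] at hsw
    rw [hJ1, hsw]
    exact lintegral_congr fun t => hvol t
  have hIJ : I ≤ J := by
    rw [hIeq, hJeq]
    exact lintegral_mono hineq
  -- J is finite
  have hJfin : J ≠ ⊤ := by
    have hb : ∀ u ∈ Icc (0:ℝ) 1, ENNReal.ofReal (h u - h 1) ≤ ENNReal.ofReal (h 0 - h 1) := by
      intro u hu
      exact ENNReal.ofReal_le_ofReal (by linarith [hdecr hu.1])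
    have : J ≤ ENNReal.ofReal (h 0 - h 1) * volume (Icc (0:ℝ) 1) := by
      rw [hJ]
      calc ∫⁻ u in Icc (0:ℝ) 1, ENNReal.ofReal (h u - h 1) ∂volume
          ≤ ∫⁻ _ in Icc (0:ℝ) 1, ENNReal.ofReal (h 0 - h 1) ∂volume :=
            setLIntegral_mono_ae (by fun_prop) (ae_of_all _ hb)
      _ = ENNReal.ofReal (h 0 - h 1) * volume (Icc (0:ℝ) 1) := by
            rw [setLIntegral_const]
    refine ne_top_of_le_ne_top ?_ this
    rw [Real.volume_Icc]
    exact ENNReal.mul_ne_top ENNReal.ofReal_ne_top ENNReal.ofReal_ne_top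
  -- convert to real integrals
  have hmeasQ : AEStronglyMeasurable (fun ω => h (Q ω) - h 1) μ :=
    ((hcont.measurable.comp hQmeas).aestronglyMeasurable).sub aestronglyMeasurable_const
  have hposQ : 0 ≤ᵐ[μ] fun ω => h (Q ω) - h 1 :=
    ae_of_all _ fun ω => by simp only [Pi.zero_apply]; linarith [hdecr (hQmem ω).2]
  have hposU : 0 ≤ᵐ[volume.restrict (Icc (0:ℝ) 1)] fun u => h u - h 1 := by
    refine (ae_restrict_iff' measurableSet_Icc).2 (ae_of_all _ fun u hu => ?_)
    simp only [Pi.zero_apply]; linarith [hdecr hu.2]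
  have hmeasU : AEStronglyMeasurable (fun u => h u - h 1) (volume.restrict (Icc (0:ℝ) 1)) :=
    (hcont.aestronglyMeasurable).sub aestronglyMeasurable_const
  have e1 : ∫ ω, (h (Q ω) - h 1) ∂μ = I.toReal := by
    rw [hI, integral_eq_lintegral_of_nonneg_ae hposQ hmeasQ]
  have e2 : ∫ u in Icc (0:ℝ) 1, (h u - h 1) = J.toReal := by
    rw [hJ, integral_eq_lintegral_of_nonneg_ae hposU hmeasU]
  have hcomp : ∫ ω, (h (Q ω) - h 1) ∂μ ≤ ∫ u in Icc (0:ℝ) 1, (h u - h 1) := by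
    rw [e1, e2]
    exact ENNReal.toReal_mono hJfin hIJ
  -- integrability of h ∘ Q
  obtain ⟨C, hC⟩ := isCompact_Icc.exists_bound_of_continuousOn (hcont.continuousOn (s := Icc (0:ℝ) 1))
  have hintQ : Integrable (fun ω => h (Q ω)) μ := by
    refine Integrable.mono' (integrable_const C) (hcont.measurable.comp hQmeas).aestronglyMeasurable
      (ae_of_all _ fun ω => hC _ (hQmem ω))
  have expand1 : ∫ ω, (h (Q ω) - h 1) ∂μ = (∫ ω, h (Q ω) ∂μ) - h 1 := by
    rw [integral_sub hintQ (integrable_const _), integral_const]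
    simp
  have expand2 : ∫ u in Icc (0:ℝ) 1, (h u - h 1) = (∫ u in Icc (0:ℝ) 1, h u) - h 1 := by
    rw [integral_sub hintU (integrable_const _), integral_const]
    simp [Real.volume_Icc]
  rw [expand1, expand2] at hcomp
  linarith

lemma jensen_step {Ω E : Type*} [MeasurableSpace Ω] (μ : Measure Ω) [IsProbabilityMeasure μ]
    [MeasurableSpace E]
    (Q : Ω → ℝ) (hQmeas : Measurable Q) (hQmem : ∀ ω, Q ω ∈ Icc (0 : ℝ) 1)
    (D : Ω → E) (hD : Measurable D)
    (P : Ω → ℝ)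
    (hP : P = μ[Q | MeasurableSpace.comap D inferInstance])
    (hconv : ConvexOn ℝ Set.univ h) (hcont : Continuous h)
    (hintP : Integrable (fun ω : Ω => h (P ω)) μ) :
    ∫ ω, h (P ω) ∂μ ≤ ∫ ω, h (Q ω) ∂μ := by
  set m : MeasurableSpace Ω := MeasurableSpace.comap D inferInstance with hmdef
  have hm := hD.comap_le
  have hQint : Integrable Q μ := by
    refine Integrable.mono' (integrable_const 1) hQmeas.aestronglyMeasurable
      (ae_of_all _ fun ω => ?_)
    rw [Real.norm_eq_abs, abs_le]
    exact ⟨by linarith [(hQmem ω).1], (hQmem ω).2⟩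
  obtain ⟨C0, hC0⟩ := isCompact_Icc.exists_bound_of_continuousOn
    (hcont.continuousOn (s := Icc (0:ℝ) 1))
  have hHQint : Integrable (fun ω => h (Q ω)) μ :=
    Integrable.mono' (integrable_const C0) (hcont.measurable.comp hQmeas).aestronglyMeasurable
      (ae_of_all _ fun ω => hC0 _ (hQmem ω))
  set G : Ω → ℝ := μ[fun ω => h (Q ω) | m] with hG
  -- for each rational r, the affine lower bound passes through condexp
  have key : ∀ r : ℚ, (fun ω => h r + rSlope h r * (P ω - (r:ℝ))) ≤ᵐ[μ] G := by
    intro r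
    set b : ℝ := rSlope h r with hb
    set c : ℝ := h r - b * r with hc
    have haffQ : (fun ω => c + b * Q ω) = (fun _ => c) + b • Q := by
      funext ω; simp [Pi.add_apply, Pi.smul_apply, smul_eq_mul]
    have hintaff : Integrable (fun ω => c + b * Q ω) μ := by
      rw [haffQ]; exact (integrable_const c).add (hQint.smul b)
    have h1 : μ[fun ω => c + b * Q ω | m] =ᵐ[μ] fun ω => c + b * P ω := by
      rw [haffQ]
      calc μ[(fun _ => c) + b • Q | m]
          =ᵐ[μ] μ[fun _ => c | m] + μ[b • Q | m] :=
            condExp_add (integrable_const c) (hQint.smul b) m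
      _ =ᵐ[μ] fun ω => c + b * P ω := by
            have hcE : (μ[fun _ : Ω => c | m]) = fun _ => c := condExp_const (μ := μ) hm c
            have h2 : μ[b • Q | m] =ᵐ[μ] b • μ[Q | m] := condExp_smul b Q m
            filter_upwards [h2] with ω hω
            show (μ[fun _ : Ω => c | m]) ω + (μ[b • Q | m]) ω = c + b * P ω
            rw [hcE, hω, hP]
            simp [smul_eq_mul]
    have h3 : μ[fun ω => c + b * Q ω | m] ≤ᵐ[μ] G := by
      refine condExp_mono hintaff hHQint (ae_of_all _ fun ω => ?_)
      have := rSlope_support hconv r (Q ω)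
      simp only [hc, hb]
      calc h ↑r - rSlope h ↑r * ↑r + rSlope h ↑r * Q ω
          = h ↑r + rSlope h ↑r * (Q ω - ↑r) := by ring
      _ ≤ h (Q ω) := this
    filter_upwards [h1.symm.le.trans h3] with ω hω
    calc h ↑r + rSlope h ↑r * (P ω - ↑r) = c + b * P ω := by simp [hc, hb]; ring
    _ ≤ G ω := hω
  have hae : ∀ᵐ ω ∂μ, ∀ r : ℚ, h r + rSlope h r * (P ω - (r:ℝ)) ≤ G ω :=
    ae_all_iff.2 fun r => key r
  have hmain : ∀ᵐ ω ∂μ, h (P ω) ≤ G ω := by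
    filter_upwards [hae] with ω hω
    refine le_of_forall_pos_le_add fun ε hε => ?_
    obtain ⟨r, hr⟩ := rSlope_approx hconv (P ω) hε
    linarith [hω r]
  calc ∫ ω, h (P ω) ∂μ ≤ ∫ ω, G ω ∂μ := integral_mono_ae hintP integrable_condExp hmain
  _ = ∫ ω, h (Q ω) ∂μ := integral_condExp hm

end DcxAux

open MeasureTheory Set

/-- If `Q` is `[0,1]`-valued with `Q ≥_st U` (i.e. `P(Q ≤ t) ≤ t`
for all `t`), where `U` is uniform on `[0,1]`, then `P = E(Q | D)` satisfies
`P ≤_dcx U`: for every decreasing convex `h`, `E[h(P)] ≤ E[h(U)]`. -/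
theorem posterior_predictive_dcx_order
    {Ω E : Type*} [MeasurableSpace Ω] (μ : Measure Ω) [IsProbabilityMeasure μ]
    [MeasurableSpace E]
    (Q : Ω → ℝ) (hQmeas : Measurable Q) (hQmem : ∀ ω, Q ω ∈ Icc (0 : ℝ) 1)
    (hQst : ∀ t : ℝ, μ {ω | Q ω ≤ t} ≤ ENNReal.ofReal t)
    (D : Ω → E) (hD : Measurable D)
    (P : Ω → ℝ)
    (hP : P = μ[Q | MeasurableSpace.comap D inferInstance])
    (h : ℝ → ℝ) (hconv : ConvexOn ℝ Set.univ h) (hdecr : Antitone h)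
    (hintP : Integrable (fun ω : Ω => h (P ω)) μ)
    (hintU : IntegrableOn h (Icc (0 : ℝ) 1) volume) :
    ∫ ω, h (P ω) ∂μ ≤ ∫ u in Icc (0 : ℝ) 1, h u := by
  have hcont : Continuous h := continuousOn_univ.1 (hconv.continuousOn isOpen_univ)
  exact le_trans
    (DcxAux.jensen_step μ Q hQmeas hQmem D hD P hP hconv hcont hintP)
    (DcxAux.stoch_step μ Q hQmeas hQmem hQst h hcont hdecr hintU)
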